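/- For every integer p ≥ 1 and every real α, the scalar TASE function is p-th order accurate: the function z ↦ T p α z - 1 is big-O of z^p as z → 0 in ℂ (i.e., IsBigO (nhds 0) (fun z => T p α z - 1) (fun z => z^p)). -/

import Mathlib

open Asymptotics

noncomputable def T : ℕ → ℝ → ℂ → ℂ
  | 0, _, _ => 1
  | 1, α, z => (1 - (α : ℂ) * z)⁻¹
  | p + 2, α, z =>
      (2 ^ (p + 1) * T (p + 1) (α / 2) z - T (p + 1) α z) / (2 ^ (p + 1) - 1)

lemma analyticAt_dslope_zero {f : ℂ → ℂ} (h : AnalyticAt ℂ f 0) :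
    AnalyticAt ℂ (dslope f 0) 0 := by
  obtain ⟨p, hp⟩ := h
  exact hp.has_fpower_series_dslope_fslope.analyticAt

lemma dslope_mul_eq {f : ℂ → ℂ} (h0 : f 0 = 0) (w : ℂ) :
    w * dslope f 0 w = f w := by
  rcases eq_or_ne w 0 with rfl | hw
  · simp [h0]
  · rw [dslope_of_ne _ hw, slope_def_field]
    field_simp [h0]
    rw [h0]; ring

lemma tase_key (n : ℕ) :
    ∃ F : ℂ → ℂ, AnalyticAt ℂ F 0 ∧
      ∀ α : ℝ, ∀ᶠ z in nhds (0 : ℂ), T (n + 1) α z - 1 = (α * z) ^ (n + 1) * F (α * z) := by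
  induction n with
  | zero =>
    refine ⟨fun w => (1 - w)⁻¹, ?_, ?_⟩
    · exact (analyticAt_const.sub (analyticAt_id)).inv (by simp)
    · intro α
      have hcont : ContinuousAt (fun z : ℂ => 1 - (α : ℂ) * z) 0 := by fun_prop
      have hne : ∀ᶠ z in nhds (0 : ℂ), 1 - (α : ℂ) * z ≠ 0 :=
        hcont.eventually_ne (by simp)
      filter_upwards [hne] with z hz
      show (1 - (α : ℂ) * z)⁻¹ - 1 = _
      field_simp
      ring
  | succ n ih =>
    obtain ⟨F, hF, hFe⟩ := ih
    set c : ℂ := 2 ^ (n + 1) - 1 with hc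
    have hcne : c ≠ 0 := by
      rw [hc, sub_ne_zero]
      have hn : (2 : ℕ) ^ (n + 1) ≠ 1 := (Nat.one_lt_two_pow_iff.mpr (Nat.succ_ne_zero n)).ne'
      exact_mod_cast hn
    set H : ℂ → ℂ := fun w => (F (w / 2) - F w) / c with hH
    have hHanal : AnalyticAt ℂ H 0 := by
      have h2 : AnalyticAt ℂ (fun w : ℂ => F (w / 2)) 0 := by
        have hin : AnalyticAt ℂ (fun w : ℂ => w / 2) 0 :=
          (analyticAt_id).div analyticAt_const two_ne_zero
        have hF' : AnalyticAt ℂ F ((fun w : ℂ => w / 2) 0) := by simpa using hF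
        exact AnalyticAt.comp (g := F) (f := fun w : ℂ => w / 2) hF' hin
      exact ((h2.sub hF).div analyticAt_const hcne)
    have hH0 : H 0 = 0 := by simp [hH]
    refine ⟨dslope H 0, analyticAt_dslope_zero hHanal, ?_⟩
    intro α
    filter_upwards [hFe α, hFe (α / 2)] with z h1 h2
    have key : T (n + 2) α z - 1 = (↑α * z) ^ (n + 1) * H (↑α * z) := by
      show (2 ^ (n + 1) * T (n + 1) (α / 2) z - T (n + 1) α z) / (2 ^ (n + 1) - 1) - 1
          = (↑α * z) ^ (n + 1) * H (↑α * z)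
      have e2 : T (n + 1) (α / 2) z = 1 + (↑α * z / 2) ^ (n + 1) * F (↑α * z / 2) := by
        have : ((α / 2 : ℝ) : ℂ) * z = ↑α * z / 2 := by push_cast; ring
        rw [← sub_eq_iff_eq_add', h2, this]
      have e1 : T (n + 1) α z = 1 + (↑α * z) ^ (n + 1) * F (↑α * z) := by
        rw [← sub_eq_iff_eq_add', h1]
      rw [e1, e2, hH]
      rw [div_sub_one (by rw [← hc]; exact hcne), ← hc]
      rw [div_eq_iff hcne, div_pow]
      field_simp
      ring
    rw [key, ← dslope_mul_eq hH0 (↑α * z)]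
    ring

/-- The scalar TASE function of order `p` is `p`-th order accurate:
`T p α z - 1 = O(z^p)` as `z → 0`. -/
theorem tase_order_accuracy (p : ℕ) (hp : 1 ≤ p) (α : ℝ) :
    (fun z : ℂ => T p α z - 1) =O[nhds 0] fun z : ℂ => z ^ p := by
  obtain ⟨n, rfl⟩ : ∃ n, p = n + 1 := ⟨p - 1, by omega⟩
  obtain ⟨F, hF, hFe⟩ := tase_key n
  have hb : (fun z : ℂ => F (↑α * z)) =O[nhds 0] (fun _ : ℂ => (1 : ℂ)) := by
    have hcont : Filter.Tendsto (fun z : ℂ => F (↑α * z)) (nhds 0) (nhds (F 0)) := by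
      have h1 : Filter.Tendsto (fun z : ℂ => (α : ℂ) * z) (nhds 0) (nhds 0) := by
        simpa using (continuous_mul_left (α : ℂ)).tendsto (0 : ℂ)
      exact hF.continuousAt.tendsto.comp h1
    exact hcont.isBigO_one ℂ
  have h1 : (fun z : ℂ => (↑α * z) ^ (n + 1)) =O[nhds 0] (fun z : ℂ => z ^ (n + 1)) := by
    simpa [mul_pow, mul_comm] using
      (isBigO_refl (fun z : ℂ => z ^ (n + 1)) (nhds 0)).const_mul_left ((α : ℂ) ^ (n + 1))
  have h2 := h1.mul hb
  simp only [mul_one] at h2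
  have heq : (fun z : ℂ => T (n + 1) α z - 1) =ᶠ[nhds 0]
      fun z : ℂ => (↑α * z) ^ (n + 1) * F (↑α * z) := hFe α
  exact heq.trans_isBigO h2
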